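/- arXiv:2602.23981 — 2 statements merged into one kernel-verified Lean document; each statement's English description precedes it below -/
import Mathlib

section
/- (Closed form of the gyro-inverse in the Lorentz model.) Let c>0 and let x = (x_t, x_s) be a point on the forward hyperboloid 𝕃^n_{-c} with x_s ≠ 0. Then the logarithmic map at the pole satisfies Log_ō(x) = (0, (arcosh(√c·x_t)/(√c·‖x_s‖))·x_s), and applying the exponential map at the pole to its negation recovers the spatial reflection of x: Exp_ō(−Log_ō(x)) = (x_t, −x_s). In particular the gyro-inverse ⊖x = Exp_ō(−Log_ō(x)) equals (x_t, −x_s). -/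
open scoped RealInnerProductSpace Classical

/-- The inverse hyperbolic cosine on `ℝ`: `arcosh x = log (x + √(x² - 1))`. -/
noncomputable def Real.arcosh' (x : ℝ) : ℝ := Real.log (x + Real.sqrt (x ^ 2 - 1))

/-- The Minkowski inner product on `ℝ × ℝ^n`. -/
noncomputable def mink {n : ℕ} (x y : ℝ × EuclideanSpace ℝ (Fin n)) : ℝ :=
  -(x.1 * y.1) + ⟪x.2, y.2⟫

/-- The pole `ō = (1/√c, 0)` of the forward hyperboloid `𝕃^n_{-c}`. -/
noncomputable def pole (c : ℝ) (n : ℕ) : ℝ × EuclideanSpace ℝ (Fin n) :=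
  (1 / Real.sqrt c, 0)

/-- The exponential map of `𝕃^n_{-c}` at the pole, applied to a tangent
vector `z = (0, z_s)`:  `Exp_ō(z) = ((1/√c)·cosh(√c‖z_s‖),
(1/√c)·sinh(√c‖z_s‖)·z_s/‖z_s‖)` for `z_s ≠ 0`, and `Exp_ō(0) = ō`. -/
noncomputable def Expo (c : ℝ) {n : ℕ} (z : ℝ × EuclideanSpace ℝ (Fin n)) :
    ℝ × EuclideanSpace ℝ (Fin n) :=
  if z.2 = 0 then pole c n
  else ((1 / Real.sqrt c) * Real.cosh (Real.sqrt c * ‖z.2‖),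
        ((1 / Real.sqrt c) * Real.sinh (Real.sqrt c * ‖z.2‖) / ‖z.2‖) • z.2)

/-- The logarithmic map of `𝕃^n_{-c}` at the pole:
`Log_ō(x) = (arcosh β / √(β²-1))·(x - β·ō)` with `β = -c·⟨ō,x⟩_L` for
`x ≠ ō`, and `Log_ō(ō) = 0`. -/
noncomputable def Logo (c : ℝ) {n : ℕ} (x : ℝ × EuclideanSpace ℝ (Fin n)) :
    ℝ × EuclideanSpace ℝ (Fin n) :=
  if x = pole c n then 0
  else (Real.arcosh' (-c * mink (pole c n) x) /
          Real.sqrt ((-c * mink (pole c n) x) ^ 2 - 1)) •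
        (x - (-c * mink (pole c n) x) • pole c n)


lemma arcosh_aux {t : ℝ} (ht : 1 ≤ t) :
    Real.exp (Real.arcosh' t) = t + Real.sqrt (t ^ 2 - 1) ∧
    Real.exp (-(Real.arcosh' t)) = t - Real.sqrt (t ^ 2 - 1) := by
  have h1 : (0:ℝ) ≤ t ^ 2 - 1 := by nlinarith
  have hs := Real.sq_sqrt h1
  have hsn := Real.sqrt_nonneg (t ^ 2 - 1)
  have hu : 0 < t + Real.sqrt (t ^ 2 - 1) := by nlinarith
  constructor
  · exact Real.exp_log hu
  · rw [Real.exp_neg, Real.arcosh', Real.exp_log hu]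
    have hm : (t + Real.sqrt (t ^ 2 - 1)) * (t - Real.sqrt (t ^ 2 - 1)) = 1 := by
      nlinarith
    exact inv_eq_of_mul_eq_one_right hm

lemma cosh_arcosh {t : ℝ} (ht : 1 ≤ t) : Real.cosh (Real.arcosh' t) = t := by
  obtain ⟨h1, h2⟩ := arcosh_aux ht
  rw [Real.cosh_eq, h1, h2]; ring

lemma sinh_arcosh {t : ℝ} (ht : 1 ≤ t) :
    Real.sinh (Real.arcosh' t) = Real.sqrt (t ^ 2 - 1) := by
  obtain ⟨h1, h2⟩ := arcosh_aux ht
  rw [Real.sinh_eq, h1, h2]; ring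

lemma arcosh_pos {t : ℝ} (ht : 1 < t) : 0 < Real.arcosh' t := by
  have hsn := Real.sqrt_nonneg (t ^ 2 - 1)
  exact Real.log_pos (by nlinarith)

/-- **Closed form of the gyro-inverse in the Lorentz model.**
Let `c > 0` and let `x = (x_t, x_s) ∈ 𝕃^n_{-c}` with `x_s ≠ 0`.  Then
`Log_ō(x) = (0, (arcosh(√c·x_t)/(√c·‖x_s‖))·x_s)` and
`Exp_ō(-Log_ō(x)) = (x_t, -x_s)`; in particular the gyro-inverse
`⊖x = Exp_ō(-Log_ō(x))` equals `(x_t, -x_s)`. -/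
theorem gyro_inverse_closed_form (c : ℝ) (hc : 0 < c) (n : ℕ)
    (x : ℝ × EuclideanSpace ℝ (Fin n))
    (hx : mink x x = -(1 / c)) (hx0 : 0 < x.1) (hxs : x.2 ≠ 0) :
    Logo c x = (0, (Real.arcosh' (Real.sqrt c * x.1) /
        (Real.sqrt c * ‖x.2‖)) • x.2) ∧
      Expo c (-(Logo c x)) = (x.1, -x.2) := by
  have hs : 0 < Real.sqrt c := Real.sqrt_pos.mpr hc
  have hs2 : Real.sqrt c * Real.sqrt c = c := Real.mul_self_sqrt hc.le
  have hns : (0:ℝ) < ‖x.2‖ := norm_pos_iff.mpr hxs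
  have hxx : -(x.1 * x.1) + ‖x.2‖ ^ 2 = -(1 / c) := by
    rw [← hx, mink, real_inner_self_eq_norm_sq]
  have hβ : -c * mink (pole c n) x = Real.sqrt c * x.1 := by
    simp only [mink, pole, inner_zero_left]
    field_simp
    nlinarith
  have h1c : c * (1 / c) = 1 := by field_simp
  have ht1 : 1 < Real.sqrt c * x.1 := by
    nlinarith [mul_pos hs hx0, mul_pos (mul_pos hc hns) hns]
  have hβ2 : (Real.sqrt c * x.1) ^ 2 - 1 = (Real.sqrt c * ‖x.2‖) ^ 2 := by
    have h1c : 1 / c * c = 1 := by field_simp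
    nlinarith
  have hsq : Real.sqrt ((Real.sqrt c * x.1) ^ 2 - 1) = Real.sqrt c * ‖x.2‖ := by
    rw [hβ2, Real.sqrt_sq (by positivity)]
  have hxp : x ≠ pole c n := by
    intro h; apply hxs; rw [h]; rfl
  have harc : 0 < Real.arcosh' (Real.sqrt c * x.1) := arcosh_pos ht1
  have hLog : Logo c x = (0, (Real.arcosh' (Real.sqrt c * x.1) /
      (Real.sqrt c * ‖x.2‖)) • x.2) := by
    rw [Logo, if_neg hxp, hβ, hsq]
    have hfst : (x - (Real.sqrt c * x.1) • pole c n).1 = 0 := by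
      simp [pole]
      field_simp
      ring
    have hsnd : (x - (Real.sqrt c * x.1) • pole c n).2 = x.2 := by
      simp [pole]
    have hxe : x - (Real.sqrt c * x.1) • pole c n = ((0:ℝ), x.2) :=
      Prod.ext hfst hsnd
    rw [hxe]
    simp
  refine ⟨hLog, ?_⟩
  rw [hLog]
  set a : ℝ := Real.arcosh' (Real.sqrt c * x.1) / (Real.sqrt c * ‖x.2‖) with ha
  have hapos : 0 < a := div_pos harc (by positivity)
  have hz2 : (-(((0:ℝ), a • x.2) : ℝ × EuclideanSpace ℝ (Fin n))).2 = -(a • x.2) := rfl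
  have hzne : -(a • x.2) ≠ (0 : EuclideanSpace ℝ (Fin n)) := by
    simp [smul_eq_zero, hapos.ne', hxs]
  have hnz : ‖-(a • x.2)‖ = a * ‖x.2‖ := by
    rw [norm_neg, norm_smul, Real.norm_eq_abs, abs_of_pos hapos]
  have hca : Real.sqrt c * ‖-(a • x.2)‖ = Real.arcosh' (Real.sqrt c * x.1) := by
    rw [hnz, ha]; field_simp
  rw [Expo]
  simp only [hz2]
  rw [if_neg hzne, hca, cosh_arcosh ht1.le, sinh_arcosh ht1.le, hsq, hnz]
  refine Prod.ext ?_ ?_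
  · show 1 / Real.sqrt c * (Real.sqrt c * x.1) = x.1
    field_simp
  · show (1 / Real.sqrt c * (Real.sqrt c * ‖x.2‖) / (a * ‖x.2‖)) • -(a • x.2) = -x.2
    rw [smul_neg, smul_smul]
    have : 1 / Real.sqrt c * (Real.sqrt c * ‖x.2‖) / (a * ‖x.2‖) * a = 1 := by
      field_simp
    rw [this, one_smul]
end

section
/- (Exp–Log inversion at the pole.) Let c>0 and let x be any point on the forward hyperboloid 𝕃^n_{-c}. Then Exp_ō(Log_ō(x)) = x, where Exp_ō and Log_ō are the exponential and logarithmic maps of 𝕃^n_{-c} at the pole ō = (1/√c, 0). -/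
open scoped RealInnerProductSpace Classical

/-- **Exp–Log inversion at the pole.**
Let `c > 0` and let `x` lie on the forward hyperboloid `𝕃^n_{-c}`.  Then
`Exp_ō(Log_ō(x)) = x`. -/
theorem exp_log_inversion (c : ℝ) (hc : 0 < c) (n : ℕ)
    (x : ℝ × EuclideanSpace ℝ (Fin n))
    (hx : mink x x = -(1 / c)) (hx0 : 0 < x.1) :
    Expo c (Logo c x) = x := by
  by_cases hxp : x = pole c n
  · subst hxp; simp [Logo, Expo]
  · set sc := Real.sqrt c with hsc_def
    have hsc : 0 < sc := Real.sqrt_pos.mpr hc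
    have hsc2 : sc ^ 2 = c := Real.sq_sqrt hc.le
    have hinner : ⟪x.2, x.2⟫ = ‖x.2‖ ^ 2 := real_inner_self_eq_norm_sq x.2
    have hx2 : x.2 ≠ 0 := by
      intro h
      apply hxp
      have hxx : x.1 * x.1 = c⁻¹ := by
        have := hx; simpa [mink, h] using this
      have hq : x.1 * x.1 = (1 / sc) * (1 / sc) := by
        rw [hxx]; field_simp; rw [← hsc2]
      have hx1 : x.1 = 1 / sc := by
        rcases mul_self_eq_mul_self_iff.mp hq with h' | h'
        · exact h'
        · exfalso; have h1 : (0:ℝ) < 1 / sc := by positivity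
          nlinarith
      exact Prod.ext hx1 h
    have hr : 0 < ‖x.2‖ := norm_pos_iff.mpr hx2
    set r := ‖x.2‖ with hr_def
    have hβval : -c * mink (pole c n) x = sc * x.1 := by
      simp [mink, pole]
      field_simp
      nlinarith [hsc2]
    set β := sc * x.1 with hβ_def
    have hxx : -(x.1 * x.1) + r ^ 2 = -(1 / c) := by
      have := hx; simp [mink, hinner] at this; rw [one_div]; linarith
    have hβpos : 0 < β := mul_pos hsc hx0
    have hβ2 : β ^ 2 - 1 = c * r ^ 2 := by
      have h1 : x.1 * x.1 = 1 / c + r ^ 2 := by linarith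
      have hcx : c * (x.1 * x.1) = 1 + c * r ^ 2 := by
        rw [h1, mul_add, mul_one_div, div_self hc.ne']
      have h2 : β ^ 2 = c * (x.1 * x.1) := by
        rw [hβ_def, mul_pow, hsc2]; ring
      rw [h2]; linarith
    have hβ1 : 1 < β := by
      nlinarith [hβ2, hβpos, mul_pos hc (mul_pos hr hr)]
    have hsqrt : Real.sqrt (β ^ 2 - 1) = sc * r := by
      rw [hβ2, show c * r ^ 2 = (sc * r) ^ 2 by rw [mul_pow, hsc2]]
      exact Real.sqrt_sq (by positivity)
    set t := β + sc * r with ht_def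
    have ht1 : 1 < t := by nlinarith [mul_pos hsc hr]
    have ht0 : 0 < t := by linarith
    have hinv : 1 / t = β - sc * r := by
      rw [eq_comm, eq_div_iff ht0.ne']
      nlinarith [hβ2, hsc2]
    set A := Real.arcosh' β with hA_def
    have hAeq : A = Real.log t := by rw [hA_def, Real.arcosh', hsqrt]
    have hApos : 0 < A := by rw [hAeq]; exact Real.log_pos ht1
    have hcoshA : Real.cosh A = β := by
      rw [hAeq, Real.cosh_eq, Real.exp_neg, Real.exp_log ht0, ← one_div, hinv]; ring
    have hsinhA : Real.sinh A = sc * r := by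
      rw [hAeq, Real.sinh_eq, Real.exp_neg, Real.exp_log ht0, ← one_div, hinv]; ring
    -- compute Logo
    have hsub : x - β • pole c n = (0, x.2) := by
      apply Prod.ext
      · show x.1 - β * (1 / sc) = 0
        rw [hβ_def]; field_simp; ring
      · show x.2 - β • (0 : EuclideanSpace ℝ (Fin n)) = x.2
        simp
    have hLogo : Logo c x = (0, (A / (sc * r)) • x.2) := by
      rw [Logo, if_neg hxp, hβval, hsqrt, ← hA_def, hsub]
      apply Prod.ext
      · show A / (sc * r) * 0 = 0; ring
      · rfl
    have hlam : 0 < A / (sc * r) := by positivity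
    have hz2 : (Logo c x).2 = (A / (sc * r)) • x.2 := by rw [hLogo]
    have hz2ne : (Logo c x).2 ≠ 0 := by
      rw [hz2]; exact smul_ne_zero hlam.ne' hx2
    have hnorm : ‖(Logo c x).2‖ = A / sc := by
      rw [hz2, norm_smul, Real.norm_eq_abs, abs_of_pos hlam, ← hr_def]
      field_simp
    have hscnorm : sc * ‖(Logo c x).2‖ = A := by
      rw [hnorm]; field_simp
    rw [Expo, if_neg hz2ne, hscnorm]
    apply Prod.ext
    · show 1 / sc * Real.cosh A = x.1
      rw [hcoshA, hβ_def]; field_simp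
    · show (1 / sc * Real.sinh A / ‖(Logo c x).2‖) • (Logo c x).2 = x.2
      rw [hsinhA, hnorm, hz2, smul_smul]
      rw [show 1 / sc * (sc * r) / (A / sc) * (A / (sc * r)) = 1 by field_simp]
      simp
end
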